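/- Let a and b be positive integers, and let M_a and M_b be independent random variables distributed respectively as the maximum of a and of b i.i.d. rate-1 exponential random variables (equivalently, with cumulative distribution functions x ↦ (1 − e^{−x})^a and x ↦ (1 − e^{−x})^b on [0,∞)). Then P(M_a < M_b) = b/(a+b). -/

import Mathlib

open MeasureTheory ProbabilityTheory Real Set Filter
open scoped ENNReal

namespace Stmt3Aux

lemma one_sub_exp_nonneg {t : ℝ} (ht : 0 ≤ t) : 0 ≤ 1 - Real.exp (-t) := by
  have := Real.exp_le_one_iff.mpr (by linarith : -t ≤ 0); linarith

lemma one_sub_exp_le_one (t : ℝ) : 1 - Real.exp (-t) ≤ 1 := by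
  have := Real.exp_pos (-t); linarith

/-- derivative of `(1 - exp (-t))^n` -/
lemma hasDerivAt_pow_one_sub_exp (n : ℕ) (t : ℝ) :
    HasDerivAt (fun s : ℝ => (1 - Real.exp (-s)) ^ n)
      ((n : ℝ) * Real.exp (-t) * (1 - Real.exp (-t)) ^ (n - 1)) t := by
  have h1 : HasDerivAt (fun s : ℝ => 1 - Real.exp (-s)) (Real.exp (-t)) t := by
    have h2 : HasDerivAt (fun s : ℝ => Real.exp (-s)) (-Real.exp (-t)) t := by
      exact ((Real.hasDerivAt_exp (-t)).comp t (hasDerivAt_neg t)).congr_deriv (by ring)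
    exact ((hasDerivAt_const t (1:ℝ)).sub h2).congr_deriv (by ring)
  have := h1.pow n
  exact this.congr_deriv (by ring)

lemma ftc (n : ℕ) (hn : 1 ≤ n) (k : ℝ) :
    ∫ t in (0:ℝ)..k, (n : ℝ) * Real.exp (-t) * (1 - Real.exp (-t)) ^ (n - 1)
      = (1 - Real.exp (-k)) ^ n := by
  rw [intervalIntegral.integral_eq_sub_of_hasDerivAt
      (fun t _ => hasDerivAt_pow_one_sub_exp n t)
      ((Continuous.intervalIntegrable (by fun_prop) 0 k))]
  simp [Real.exp_zero, zero_pow (by omega : n ≠ 0)]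

/-- the generic lintegral computation -/
lemma lint_Iic (F : ℝ → ℝ) (hF : Continuous F) (hFnn : ∀ x, 0 ≤ x → 0 ≤ F x)
    (k : ℝ) (hk : 0 ≤ k) :
    ∫⁻ t in Iic k, ENNReal.ofReal (if 0 ≤ t then F t else 0)
      = ENNReal.ofReal (∫ t in (0:ℝ)..k, F t) := by
  have hsplit : Iic k = Iio 0 ∪ Icc 0 k := by
    ext t; simp only [mem_Iic, mem_union, mem_Iio, mem_Icc]
    constructor
    · intro h; rcases lt_or_ge t 0 with h0 | h0
      · exact Or.inl h0
      · exact Or.inr ⟨h0, h⟩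
    · rintro (h | ⟨h1, h2⟩)
      · linarith
      · exact h2
  rw [hsplit, lintegral_union measurableSet_Icc (by
    refine Set.disjoint_left.mpr ?_
    rintro t ht ⟨h1, h2⟩; exact absurd h1 (not_le.mpr ht))]
  have h1 : ∫⁻ t in Iio (0:ℝ), ENNReal.ofReal (if 0 ≤ t then F t else 0) = 0 := by
    have : ∫⁻ t in Iio (0:ℝ), ENNReal.ofReal (if 0 ≤ t then F t else 0)
        = ∫⁻ _t in Iio (0:ℝ), 0 :=
      setLIntegral_congr_fun measurableSet_Iio
        (fun t (ht : t ∈ Iio (0:ℝ)) => by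
          rw [if_neg (not_le.mpr ht), ENNReal.ofReal_zero])
    simpa using this
  have h2 : ∫⁻ t in Icc (0:ℝ) k, ENNReal.ofReal (if 0 ≤ t then F t else 0)
      = ∫⁻ t in Icc (0:ℝ) k, ENNReal.ofReal (F t) :=
    setLIntegral_congr_fun measurableSet_Icc (fun t ht => by rw [if_pos ht.1])
  have hnn : (0 : ℝ → ℝ) ≤ᵐ[volume.restrict (Icc (0:ℝ) k)] F :=
    (ae_restrict_iff' measurableSet_Icc).mpr (ae_of_all _ (fun t ht => hFnn t ht.1))
  rw [h1, h2, zero_add, ← ofReal_integral_eq_lintegral_ofReal hF.integrableOn_Icc hnn]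
  rw [MeasureTheory.integral_Icc_eq_integral_Ioc, ← intervalIntegral.integral_of_le hk]

noncomputable def dens (n : ℕ) (x : ℝ) : ℝ≥0∞ :=
  ENNReal.ofReal (if 0 ≤ x then (n : ℝ) * Real.exp (-x) * (1 - Real.exp (-x)) ^ (n - 1) else 0)

lemma dens_measurable (n : ℕ) : Measurable (dens n) := by
  unfold dens
  apply Measurable.ennreal_ofReal
  exact Measurable.ite measurableSet_Ici (by fun_prop) measurable_const

noncomputable def ν (n : ℕ) : Measure ℝ := volume.withDensity (dens n)

lemma ν_Iic (n : ℕ) (hn : 1 ≤ n) (x : ℝ) :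
    ν n (Iic x) = ENNReal.ofReal (if 0 ≤ x then (1 - Real.exp (-x)) ^ n else 0) := by
  rw [ν, withDensity_apply _ measurableSet_Iic]
  rcases le_or_gt 0 x with hx | hx
  · unfold dens
    rw [lint_Iic _ (by fun_prop) (fun t ht => by
        have h1 := one_sub_exp_nonneg ht
        have h2 := (Real.exp_pos (-t)).le
        positivity) x hx,
      ftc n hn x, if_pos hx]
  · rw [if_neg (not_le.mpr hx)]
    have h0 : ∫⁻ t in Iic x, dens n t = ∫⁻ _t in Iic x, 0 :=
      setLIntegral_congr_fun measurableSet_Iic (fun t (ht : t ∈ Iic x) => by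
        unfold dens
        rw [if_neg (by simp only [mem_Iic] at ht; intro h; linarith), ENNReal.ofReal_zero])
    simpa using h0

lemma ν_finite (n : ℕ) (hn : 1 ≤ n) : IsFiniteMeasure (ν n) := by
  constructor
  have hU : ⋃ k : ℕ, Iic ((k:ℝ)) = (univ : Set ℝ) := by
    refine eq_univ_iff_forall.mpr (fun x => ?_)
    obtain ⟨k, hk⟩ := exists_nat_ge x
    exact mem_iUnion.mpr ⟨k, hk⟩
  have htd : Tendsto (fun k : ℕ => ν n (Iic (k:ℝ))) atTop (nhds (ν n univ)) := by
    rw [← hU]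
    exact tendsto_measure_iUnion_atTop
      (fun i j hij => Iic_subset_Iic.mpr (by exact_mod_cast hij))
  have hbd : ∀ k : ℕ, ν n (Iic (k:ℝ)) ≤ 1 := by
    intro k
    rw [ν_Iic n hn, if_pos (Nat.cast_nonneg k)]
    refine ENNReal.ofReal_le_one.mpr (pow_le_one₀ (one_sub_exp_nonneg (Nat.cast_nonneg k))
      (one_sub_exp_le_one _))
  exact lt_of_le_of_lt (le_of_tendsto htd (Eventually.of_forall hbd)) ENNReal.one_lt_top

lemma final (a b : ℕ) (ha : 0 < a) (hb : 0 < b) :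
    ∫⁻ x, ENNReal.ofReal (if 0 ≤ x then
        ((a:ℝ) * Real.exp (-x) * (1 - Real.exp (-x)) ^ (a-1))
          * (1 - (1 - Real.exp (-x)) ^ b) else 0) ∂(volume : Measure ℝ)
      = ENNReal.ofReal ((b : ℝ) / ((a : ℝ) + (b : ℝ))) := by
  set c : ℝ := (a:ℝ) / ((a:ℝ) + (b:ℝ)) with hc
  have hab : (a:ℝ) + (b:ℝ) ≠ 0 := by positivity
  set F : ℝ → ℝ := fun x =>
    ((a:ℝ) * Real.exp (-x) * (1 - Real.exp (-x)) ^ (a-1)) * (1 - (1 - Real.exp (-x)) ^ b)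
    with hF
  set G : ℝ → ℝ := fun x => (1 - Real.exp (-x)) ^ a - c * (1 - Real.exp (-x)) ^ (a+b) with hG
  have hderiv : ∀ t : ℝ, HasDerivAt G (F t) t := by
    intro t
    have h1 := hasDerivAt_pow_one_sub_exp a t
    have h2 := (hasDerivAt_pow_one_sub_exp (a+b) t).const_mul c
    have h3 := h1.sub h2
    refine h3.congr_deriv ?_
    symm
    have hpow : (1 - Real.exp (-t)) ^ (a + b - 1)
        = (1 - Real.exp (-t)) ^ (a - 1) * (1 - Real.exp (-t)) ^ b := by
      rw [← pow_add]; congr 1; omega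
    rw [hpow, hc]
    push_cast [Nat.cast_sub]
    field_simp
    ring
  have hftc : ∀ k : ℝ, ∫ t in (0:ℝ)..k, F t = G k := by
    intro k
    rw [intervalIntegral.integral_eq_sub_of_hasDerivAt (fun t _ => hderiv t)
      ((Continuous.intervalIntegrable (by fun_prop) 0 k))]
    have : G 0 = 0 := by
      simp [hG, Real.exp_zero, zero_pow (by omega : a ≠ 0), zero_pow (by omega : a + b ≠ 0)]
    rw [this, sub_zero]
  have hFnn : ∀ t : ℝ, 0 ≤ t → 0 ≤ F t := by
    intro t ht
    have h1 := one_sub_exp_nonneg ht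
    have h2 := (Real.exp_pos (-t)).le
    have h3 : (1 - Real.exp (-t)) ^ b ≤ 1 := pow_le_one₀ h1 (one_sub_exp_le_one t)
    have h4 : 0 ≤ ((a:ℝ) * Real.exp (-t) * (1 - Real.exp (-t)) ^ (a-1)) := by positivity
    exact mul_nonneg h4 (by linarith)
  -- the measure with density `ofReal ∘ F` on `[0,∞)`
  set ψ : Measure ℝ := volume.withDensity
    (fun x => ENNReal.ofReal (if 0 ≤ x then F x else 0)) with hψ
  have hmeas : Measurable (fun x => ENNReal.ofReal (if 0 ≤ x then F x else 0)) := by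
    apply Measurable.ennreal_ofReal
    exact Measurable.ite measurableSet_Ici (by fun_prop) measurable_const
  have hψuniv : ψ univ = ∫⁻ x, ENNReal.ofReal (if 0 ≤ x then F x else 0) ∂volume := by
    rw [hψ, withDensity_apply _ MeasurableSet.univ, Measure.restrict_univ]
  have hψIic : ∀ k : ℕ, ψ (Iic (k:ℝ)) = ENNReal.ofReal (G (k:ℝ)) := by
    intro k
    rw [hψ, withDensity_apply _ measurableSet_Iic,
      lint_Iic F (by fun_prop) hFnn (k:ℝ) (Nat.cast_nonneg k), hftc]
  have hU : ⋃ k : ℕ, Iic ((k:ℝ)) = (univ : Set ℝ) := by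
    refine eq_univ_iff_forall.mpr (fun x => ?_)
    obtain ⟨k, hk⟩ := exists_nat_ge x
    exact mem_iUnion.mpr ⟨k, hk⟩
  have htd : Tendsto (fun k : ℕ => ψ (Iic (k:ℝ))) atTop (nhds (ψ univ)) := by
    rw [← hU]
    exact tendsto_measure_iUnion_atTop
      (fun i j hij => Iic_subset_Iic.mpr (by exact_mod_cast hij))
  have hexp : Tendsto (fun k : ℕ => Real.exp (-(k:ℝ))) atTop (nhds 0) :=
    Real.tendsto_exp_neg_atTop_nhds_zero.comp tendsto_natCast_atTop_atTop
  have hu : Tendsto (fun k : ℕ => 1 - Real.exp (-(k:ℝ))) atTop (nhds 1) := by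
    simpa using (tendsto_const_nhds (x := (1:ℝ))).sub hexp
  have hGlim : Tendsto (fun k : ℕ => G (k:ℝ)) atTop (nhds (1 - c)) := by
    have := (hu.pow a).sub ((hu.pow (a+b)).const_mul c)
    simpa [hG] using this
  have htd2 : Tendsto (fun k : ℕ => ψ (Iic (k:ℝ))) atTop
      (nhds (ENNReal.ofReal (1 - c))) := by
    simp_rw [hψIic]
    exact (ENNReal.continuous_ofReal.tendsto _).comp hGlim
  have huniq : ψ univ = ENNReal.ofReal (1 - c) := tendsto_nhds_unique htd htd2
  have h1c : 1 - c = (b : ℝ) / ((a : ℝ) + (b : ℝ)) := by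
    rw [hc]; field_simp; ring
  rw [← hψuniv, huniq, h1c]

lemma if_nonneg (n : ℕ) (x : ℝ) :
    0 ≤ (if 0 ≤ x then (1 - Real.exp (-x)) ^ n else 0) := by
  split
  · next h => exact pow_nonneg (one_sub_exp_nonneg h) n
  · exact le_refl 0

end Stmt3Aux

open Stmt3Aux

theorem stmt_3 {Ω : Type*} [MeasureSpace Ω] [IsProbabilityMeasure (ℙ : Measure Ω)]
    (a b : ℕ) (ha : 0 < a) (hb : 0 < b)
    (Ma Mb : Ω → ℝ) (hMa : Measurable Ma) (hMb : Measurable Mb)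
    (hMalaw : ∀ x : ℝ,
      ℙ {ω | Ma ω ≤ x} = ENNReal.ofReal (if 0 ≤ x then (1 - Real.exp (-x)) ^ a else 0))
    (hMblaw : ∀ x : ℝ,
      ℙ {ω | Mb ω ≤ x} = ENNReal.ofReal (if 0 ≤ x then (1 - Real.exp (-x)) ^ b else 0))
    (hindep : IndepFun Ma Mb ℙ) :
    (ℙ {ω | Ma ω < Mb ω}).toReal = (b : ℝ) / ((a : ℝ) + (b : ℝ)) := by
  haveI := ν_finite a ha
  haveI : IsProbabilityMeasure ((ℙ : Measure Ω).map Mb) := Measure.isProbabilityMeasure_map hMb.aemeasurable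
  have hlawa : (ℙ : Measure Ω).map Ma = ν a := by
    refine Measure.ext_of_Iic ((ℙ : Measure Ω).map Ma) (ν a) (fun x => ?_)
    rw [Measure.map_apply hMa measurableSet_Iic, ν_Iic a ha x, ← hMalaw x]
    rfl
  have hprod : (ℙ : Measure Ω).map (fun ω => (Ma ω, Mb ω)) = ((ℙ : Measure Ω).map Ma).prod ((ℙ : Measure Ω).map Mb) :=
    (indepFun_iff_map_prod_eq_prod_map_map hMa.aemeasurable hMb.aemeasurable).mp hindep
  have hms : MeasurableSet {p : ℝ × ℝ | p.1 < p.2} :=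
    measurableSet_lt measurable_fst measurable_snd
  have key : ℙ {ω | Ma ω < Mb ω} = ∫⁻ x, ((ℙ : Measure Ω).map Mb) (Ioi x) ∂(ν a) := by
    have hs : {ω | Ma ω < Mb ω} = (fun ω => (Ma ω, Mb ω)) ⁻¹' {p : ℝ × ℝ | p.1 < p.2} := rfl
    rw [hs, ← Measure.map_apply (hMa.prodMk hMb) hms, hprod, hlawa,
      Measure.prod_apply hms]
    rfl
  have hIoi : ∀ x : ℝ, ((ℙ : Measure Ω).map Mb) (Ioi x)
      = ENNReal.ofReal (1 - (if 0 ≤ x then (1 - Real.exp (-x)) ^ b else 0)) := by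
    intro x
    rw [← compl_Iic, measure_compl measurableSet_Iic (measure_ne_top _ _), measure_univ,
      Measure.map_apply hMb measurableSet_Iic]
    have hpre : Mb ⁻¹' Iic x = {ω | Mb ω ≤ x} := rfl
    rw [hpre, hMblaw x, ENNReal.ofReal_sub _ (if_nonneg b x), ENNReal.ofReal_one]
  have key2 : ℙ {ω | Ma ω < Mb ω}
      = ∫⁻ x, dens a x
          * ENNReal.ofReal (1 - (if 0 ≤ x then (1 - Real.exp (-x)) ^ b else 0)) ∂volume := by
    rw [key]
    simp_rw [hIoi]
    rw [ν, lintegral_withDensity_eq_lintegral_mul volume (dens_measurable a)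
      (by
        apply Measurable.ennreal_ofReal
        exact (measurable_const.sub
          (Measurable.ite measurableSet_Ici (by fun_prop) measurable_const)))]
    rfl
  have hpt : ∀ x : ℝ, dens a x
      * ENNReal.ofReal (1 - (if 0 ≤ x then (1 - Real.exp (-x)) ^ b else 0))
      = ENNReal.ofReal (if 0 ≤ x then
          ((a:ℝ) * Real.exp (-x) * (1 - Real.exp (-x)) ^ (a-1))
            * (1 - (1 - Real.exp (-x)) ^ b) else 0) := by
    intro x
    unfold dens
    rcases le_or_gt 0 x with hx | hx
    · rw [if_pos hx, if_pos hx, if_pos hx, ← ENNReal.ofReal_mul (by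
        have h1 := one_sub_exp_nonneg hx
        have h2 := (Real.exp_pos (-x)).le
        positivity)]
    · simp [not_le.mpr hx]
  rw [key2]
  simp_rw [hpt]
  rw [final a b ha hb, ENNReal.toReal_ofReal (by positivity)]
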